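/- Let H = H₁ ⊕ H₂ be a direct sum of unitary representations of a compact group K, with momentum map μ. Then the momentum image of the unit sphere of H equals the join of the momentum images of the summands: μ(H) = { tX₁ + (1−t)X₂ : 0 ≤ t ≤ 1, X₁ ∈ μ(H₁), X₂ ∈ μ(H₂) }. -/

import Mathlib

/- STATEMENT 5 (Wildberger): for H = H₁ ⊕ H₂ an orthogonal direct sum of (nonzero)
invariant subspaces, the momentum image of the unit sphere of H is the join
{ t X₁ + (1−t) X₂ : t ∈ [0,1], Xᵢ ∈ μ(unit sphere of Hᵢ) }. -/

local notation "⟪" x ", " y "⟫_ℂ" => @inner ℂ _ _ x y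
local notation "⟪" x ", " y "⟫_ℝ" => @inner ℝ _ _ x y

lemma aux_norm {H : Type*} [NormedAddCommGroup H] [InnerProductSpace ℂ H]
    {Ψ₁ Ψ₂ : H} (horth : ⟪Ψ₁, Ψ₂⟫_ℂ = 0)
    (n₁ : ‖Ψ₁‖ = 1) (n₂ : ‖Ψ₂‖ = 1)
    {a b : ℝ} (hab : a ^ 2 + b ^ 2 = 1) :
    ‖(a : ℂ) • Ψ₁ + (b : ℂ) • Ψ₂‖ = 1 := by
  have h2 : ‖(a : ℂ) • Ψ₁ + (b : ℂ) • Ψ₂‖ ^ 2 = 1 := by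
    rw [@norm_add_sq ℂ]
    rw [inner_smul_left, inner_smul_right, horth]
    simp [norm_smul, n₁, n₂, mul_pow, sq_abs, Complex.norm_real]
    linarith
  nlinarith [norm_nonneg ((a : ℂ) • Ψ₁ + (b : ℂ) • Ψ₂)]

lemma aux_mu {H : Type*} [NormedAddCommGroup H] [InnerProductSpace ℂ H]
    {𝔨 : Type*} [NormedAddCommGroup 𝔨] [InnerProductSpace ℝ 𝔨] [FiniteDimensional ℝ 𝔨]
    (π : 𝔨 →ₗ[ℝ] (H →ₗ[ℂ] H))
    (H₁ H₂ : Submodule ℂ H)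
    (hortho : ∀ x ∈ H₁, ∀ y ∈ H₂, ⟪x, y⟫_ℂ = 0)
    (hinv₁ : ∀ X : 𝔨, ∀ x ∈ H₁, π X x ∈ H₁)
    (hinv₂ : ∀ X : 𝔨, ∀ y ∈ H₂, π X y ∈ H₂)
    (μ : H → 𝔨)
    (hμ : ∀ Ψ : H, ‖Ψ‖ = 1 → ∀ X : 𝔨, ⟪μ Ψ, X⟫_ℝ = (⟪Ψ, π X Ψ⟫_ℂ / Complex.I).re)
    {Ψ₁ Ψ₂ : H} (h₁ : Ψ₁ ∈ H₁) (h₂ : Ψ₂ ∈ H₂)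
    (n₁ : ‖Ψ₁‖ = 1) (n₂ : ‖Ψ₂‖ = 1)
    {a b : ℝ} (hab : a ^ 2 + b ^ 2 = 1) :
    μ ((a : ℂ) • Ψ₁ + (b : ℂ) • Ψ₂) = (a ^ 2) • μ Ψ₁ + (b ^ 2) • μ Ψ₂ := by
  have horth : ⟪Ψ₁, Ψ₂⟫_ℂ = 0 := hortho _ h₁ _ h₂
  have hn : ‖(a : ℂ) • Ψ₁ + (b : ℂ) • Ψ₂‖ = 1 := aux_norm horth n₁ n₂ hab
  apply ext_inner_right ℝ
  intro X
  have rhs : ⟪(a ^ 2) • μ Ψ₁ + (b ^ 2) • μ Ψ₂, X⟫_ℝ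
      = a ^ 2 * ⟪μ Ψ₁, X⟫_ℝ + b ^ 2 * ⟪μ Ψ₂, X⟫_ℝ := by
    rw [inner_add_left, real_inner_smul_left, real_inner_smul_left]
  rw [hμ _ hn X, rhs, hμ _ n₁ X, hμ _ n₂ X]
  have c12 : ⟪Ψ₁, π X Ψ₂⟫_ℂ = 0 := hortho _ h₁ _ (hinv₂ X _ h₂)
  have c21 : ⟪Ψ₂, π X Ψ₁⟫_ℂ = 0 := by
    have := hortho _ (hinv₁ X _ h₁) _ h₂
    rw [← inner_conj_symm, this, map_zero]
  have expand : ⟪(a : ℂ) • Ψ₁ + (b : ℂ) • Ψ₂, π X ((a : ℂ) • Ψ₁ + (b : ℂ) • Ψ₂)⟫_ℂ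
      = ((a : ℂ) ^ 2) * ⟪Ψ₁, π X Ψ₁⟫_ℂ + ((b : ℂ) ^ 2) * ⟪Ψ₂, π X Ψ₂⟫_ℂ := by
    rw [map_add, map_smul, map_smul]
    simp only [inner_add_left, inner_add_right, inner_smul_left, inner_smul_right, c12, c21,
      Complex.conj_ofReal, mul_zero, add_zero, zero_add]
    ring
  rw [expand, add_div, Complex.add_re, mul_div_assoc, mul_div_assoc,
    ← Complex.ofReal_pow, ← Complex.ofReal_pow, Complex.re_ofReal_mul, Complex.re_ofReal_mul]

lemma exists_unit {H : Type*} [NormedAddCommGroup H] [InnerProductSpace ℂ H]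
    (H₁ : Submodule ℂ H) (hne : H₁ ≠ ⊥) : ∃ v ∈ H₁, ‖v‖ = 1 := by
  obtain ⟨v, hv, hv0⟩ := Submodule.exists_mem_ne_zero_of_ne_bot hne
  refine ⟨((‖v‖⁻¹ : ℝ) : ℂ) • v, H₁.smul_mem _ hv, ?_⟩
  have : ‖v‖ ≠ 0 := norm_ne_zero_iff.mpr hv0
  rw [norm_smul]
  simp [abs_of_nonneg (inv_nonneg.mpr (norm_nonneg v))]
  field_simp


theorem momentum_image_direct_sum_join
    {H : Type*} [NormedAddCommGroup H] [InnerProductSpace ℂ H] [FiniteDimensional ℂ H]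
    {𝔨 : Type*} [NormedAddCommGroup 𝔨] [InnerProductSpace ℝ 𝔨] [FiniteDimensional ℝ 𝔨]
    -- the representation of the Lie algebra 𝔨 on H
    (π : 𝔨 →ₗ[ℝ] (H →ₗ[ℂ] H))
    -- two orthogonal, nonzero, invariant summands with H₁ ⊕ H₂ = H
    (H₁ H₂ : Submodule ℂ H)
    (hne₁ : H₁ ≠ ⊥) (hne₂ : H₂ ≠ ⊥)
    (hortho : ∀ x ∈ H₁, ∀ y ∈ H₂, ⟪x, y⟫_ℂ = 0)
    (hsum : H₁ ⊔ H₂ = ⊤)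
    (hinv₁ : ∀ X : 𝔨, ∀ x ∈ H₁, π X x ∈ H₁)
    (hinv₂ : ∀ X : 𝔨, ∀ y ∈ H₂, π X y ∈ H₂)
    -- the momentum map on unit vectors
    (μ : H → 𝔨)
    (hμ : ∀ Ψ : H, ‖Ψ‖ = 1 → ∀ X : 𝔨, ⟪μ Ψ, X⟫_ℝ = (⟪Ψ, π X Ψ⟫_ℂ / Complex.I).re) :
    μ '' {Ψ : H | ‖Ψ‖ = 1} =
      {Y : 𝔨 | ∃ t ∈ Set.Icc (0 : ℝ) 1,
        ∃ Ψ₁ ∈ H₁, ‖Ψ₁‖ = 1 ∧ ∃ Ψ₂ ∈ H₂, ‖Ψ₂‖ = 1 ∧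
          Y = t • μ Ψ₁ + (1 - t) • μ Ψ₂} := by
  ext Y
  constructor
  · rintro ⟨Ψ, hΨ, rfl⟩
    have hΨtop : Ψ ∈ H₁ ⊔ H₂ := by rw [hsum]; trivial
    obtain ⟨x, hx, y, hy, hxy⟩ := Submodule.mem_sup.mp hΨtop
    have horthxy : ⟪x, y⟫_ℂ = 0 := hortho _ hx _ hy
    have hnormsq : ‖x‖ ^ 2 + ‖y‖ ^ 2 = 1 := by
      have : ‖x + y‖ ^ 2 = ‖x‖ ^ 2 + 2 * (⟪x, y⟫_ℂ).re + ‖y‖ ^ 2 := @norm_add_sq ℂ _ _ _ _ x y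
      rw [horthxy, hxy, hΨ] at this
      simpa using this.symm
    by_cases hx0 : x = 0
    · -- Ψ ∈ H₂
      have hyΨ : y = Ψ := by rw [← hxy, hx0, zero_add]
      obtain ⟨v, hv, hv1⟩ := exists_unit H₁ hne₁
      refine ⟨0, ⟨le_refl 0, zero_le_one⟩, v, hv, hv1, Ψ, hyΨ ▸ hy, hΨ, by simp⟩
    · by_cases hy0 : y = 0
      · have hxΨ : x = Ψ := by rw [← hxy, hy0, add_zero]
        obtain ⟨v, hv, hv1⟩ := exists_unit H₂ hne₂
        refine ⟨1, ⟨zero_le_one, le_refl 1⟩, Ψ, hxΨ ▸ hx, hΨ, v, hv, hv1, by simp⟩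
      · set a := ‖x‖ with ha
        set b := ‖y‖ with hb
        have ha0 : a ≠ 0 := norm_ne_zero_iff.mpr hx0
        have hb0 : b ≠ 0 := norm_ne_zero_iff.mpr hy0
        set Ψ₁ : H := ((a⁻¹ : ℝ) : ℂ) • x with hΨ₁
        set Ψ₂ : H := ((b⁻¹ : ℝ) : ℂ) • y with hΨ₂
        have m₁ : Ψ₁ ∈ H₁ := H₁.smul_mem _ hx
        have m₂ : Ψ₂ ∈ H₂ := H₂.smul_mem _ hy
        have n₁ : ‖Ψ₁‖ = 1 := by
          rw [hΨ₁, norm_smul]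
          simp [abs_of_nonneg (inv_nonneg.mpr (norm_nonneg x)), ← ha, abs_of_nonneg (ha ▸ norm_nonneg x)]
          field_simp
        have n₂ : ‖Ψ₂‖ = 1 := by
          rw [hΨ₂, norm_smul]
          simp [abs_of_nonneg (inv_nonneg.mpr (norm_nonneg y)), ← hb, abs_of_nonneg (hb ▸ norm_nonneg y)]
          field_simp
        have hxa : (a : ℂ) • Ψ₁ = x := by
          rw [hΨ₁, smul_smul, ← Complex.ofReal_mul, mul_inv_cancel₀ ha0]; simp
        have hyb : (b : ℂ) • Ψ₂ = y := by
          rw [hΨ₂, smul_smul, ← Complex.ofReal_mul, mul_inv_cancel₀ hb0]; simp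
        have key := aux_mu π H₁ H₂ hortho hinv₁ hinv₂ μ hμ m₁ m₂ n₁ n₂ hnormsq
        rw [hxa, hyb, hxy] at key
        refine ⟨a ^ 2, ⟨sq_nonneg a, by nlinarith [sq_nonneg b]⟩, Ψ₁, m₁, n₁, Ψ₂, m₂, n₂, ?_⟩
        rw [key]
        congr 1
        rw [show (1 : ℝ) - a ^ 2 = b ^ 2 by linarith]
  · rintro ⟨t, ⟨ht0, ht1⟩, Ψ₁, h₁, n₁, Ψ₂, h₂, n₂, rfl⟩
    set a := Real.sqrt t with ha
    set b := Real.sqrt (1 - t) with hb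
    have ha2 : a ^ 2 = t := Real.sq_sqrt ht0
    have hb2 : b ^ 2 = 1 - t := Real.sq_sqrt (by linarith)
    have hab : a ^ 2 + b ^ 2 = 1 := by rw [ha2, hb2]; ring
    have horth : ⟪Ψ₁, Ψ₂⟫_ℂ = 0 := hortho _ h₁ _ h₂
    refine ⟨(a : ℂ) • Ψ₁ + (b : ℂ) • Ψ₂, aux_norm horth n₁ n₂ hab, ?_⟩
    rw [aux_mu π H₁ H₂ hortho hinv₁ hinv₂ μ hμ h₁ h₂ n₁ n₂ hab, ha2, hb2]
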